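/- Let 0 < δ < 1 and define σ_ℓ = 1/2 + 1/(2·exp(ℓ^{1-δ})) for positive integers ℓ. Then there exists ℓ₁ such that for all ℓ ≥ ℓ₁, σ_{ℓ-1} - σ_ℓ ≤ (2σ_ℓ - 1)/ℓ^δ. -/

import Mathlib

set_option maxHeartbeats 1000000 in

theorem stmt_3 (δ : ℝ) (hδ0 : 0 < δ) (hδ1 : δ < 1) :
    ∃ ℓ₁ : ℕ, ∀ ℓ : ℕ, ℓ₁ ≤ ℓ → 2 ≤ ℓ →
      (1/2 + 1/(2 * Real.exp ((ℓ - 1 : ℕ) ^ (1 - δ)))) -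
        (1/2 + 1/(2 * Real.exp ((ℓ : ℝ) ^ (1 - δ))))
      ≤ (2 * (1/2 + 1/(2 * Real.exp ((ℓ : ℝ) ^ (1 - δ)))) - 1) / (ℓ : ℝ) ^ δ := by
  refine ⟨⌈1/δ⌉₊ + ⌈(2:ℝ) ^ (δ⁻¹)⌉₊ + 2, fun ℓ hℓ hℓ2 => ?_⟩
  set L : ℝ := (ℓ : ℝ) with hL
  have hL2 : (2:ℝ) ≤ L := by rw [hL]; exact_mod_cast hℓ2
  have hL1 : (1:ℝ) ≤ L - 1 := by linarith
  have hLpos : (0:ℝ) < L := by linarith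
  have hLm1pos : (0:ℝ) < L - 1 := by linarith
  have hcast : ((ℓ - 1 : ℕ) : ℝ) = L - 1 := by
    have h1 : 1 ≤ ℓ := by omega
    rw [hL]; push_cast [Nat.cast_sub h1]; ring
  rw [hcast]
  have hδL : 1 / L ≤ δ := by
    have h1 : (⌈1/δ⌉₊ : ℝ) ≤ L := by
      rw [hL]
      have : (⌈1/δ⌉₊ : ℕ) ≤ ℓ := by omega
      exact_mod_cast this
    have h2 : 1/δ ≤ L := le_trans (Nat.le_ceil _) h1
    rw [div_le_iff₀ hLpos]
    rw [div_le_iff₀ hδ0] at h2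
    nlinarith
  have h2L : (2:ℝ) ^ (δ⁻¹) ≤ L - 1 := by
    have h1 : (⌈(2:ℝ) ^ (δ⁻¹)⌉₊ : ℝ) ≤ L - 1 := by
      have h : (⌈(2:ℝ) ^ (δ⁻¹)⌉₊ + 1 : ℕ) ≤ ℓ := by omega
      have h' := (Nat.cast_le (α := ℝ)).mpr h
      rw [← hL] at h'
      push_cast at h'; linarith
    exact le_trans (Nat.le_ceil _) h1
  set a : ℝ := (L - 1) ^ (1 - δ) with ha
  set b : ℝ := L ^ (1 - δ) with hb
  have h1δ : (0:ℝ) ≤ 1 - δ := by linarith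
  have hpow2 : (2:ℝ) ≤ (L - 1) ^ δ := by
    have heq : ((2:ℝ) ^ (δ⁻¹)) ^ δ = 2 := by
      rw [← Real.rpow_mul (by norm_num : (0:ℝ) ≤ 2), inv_mul_cancel₀ hδ0.ne', Real.rpow_one]
    calc (2:ℝ) = ((2:ℝ) ^ (δ⁻¹)) ^ δ := heq.symm
      _ ≤ (L - 1) ^ δ := Real.rpow_le_rpow (Real.rpow_nonneg (by norm_num) _) h2L hδ0.le
  have hLm1δpos : (0:ℝ) < (L - 1) ^ δ := Real.rpow_pos_of_pos hLm1pos _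
  have hapos : (0:ℝ) < a := Real.rpow_pos_of_pos hLm1pos _
  have hba : b - a ≤ (1 - δ) / (L - 1) ^ δ := by
    have hber : (1 + 1/(L-1)) ^ (1-δ) ≤ 1 + (1-δ) * (1/(L-1)) :=
      rpow_one_add_le_one_add_mul_self
        (le_trans (by norm_num : (-1:ℝ) ≤ 0) (by positivity)) h1δ (by linarith)
    have hbeq : b = a * (1 + 1/(L-1)) ^ (1-δ) := by
      rw [ha, hb, ← Real.mul_rpow hLm1pos.le (by positivity)]
      congr 1
      field_simp
      ring
    have key : b ≤ a + a * ((1-δ) * (1/(L-1))) := by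
      rw [hbeq]
      nlinarith [mul_le_mul_of_nonneg_left hber hapos.le]
    have hmul : a * (L-1)^δ = L - 1 := by
      rw [ha, ← Real.rpow_add hLm1pos]
      norm_num
    have haq : a * (1/(L-1)) = 1/(L-1)^δ := by
      rw [eq_div_iff hLm1δpos.ne']
      field_simp
      linear_combination hmul
    calc b - a ≤ a * ((1-δ) * (1/(L-1))) := by linarith
      _ = (1-δ) * (a * (1/(L-1))) := by ring
      _ = (1-δ) * (1/(L-1)^δ) := by rw [haq]
      _ = (1-δ) / (L-1)^δ := by ring
  have hab : a ≤ b := Real.rpow_le_rpow hLm1pos.le (by linarith) h1δ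
  set x : ℝ := b - a with hx
  have hx0 : 0 ≤ x := by linarith
  have hxhalf : x ≤ 1/2 := by
    have h1 : (1-δ)/(L-1)^δ ≤ 1/2 := by
      rw [div_le_div_iff₀ hLm1δpos (by norm_num : (0:ℝ) < 2)]
      nlinarith
    linarith
  have hexp2 : Real.exp x ≤ 2 := by
    have h1 : Real.exp x ≤ Real.exp (1/2) := Real.exp_le_exp.mpr hxhalf
    have h2 : Real.exp (1/2) < 2 := by
      nlinarith [Real.exp_one_lt_d9, Real.exp_pos (1/2),
        Real.exp_add (1/2) (1/2), Real.exp_one_gt_d9]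
    linarith
  have hex : Real.exp x - 1 ≤ 2 * x := by
    have h1 : 1 - x ≤ Real.exp (-x) := by
      have := Real.add_one_le_exp (-x); linarith
    have h2 : (1 - x) * Real.exp x ≤ 1 := by
      have := mul_le_mul_of_nonneg_right h1 (Real.exp_pos x).le
      rw [← Real.exp_add] at this
      simpa using this
    nlinarith [Real.exp_pos x]
  have hLδpos : (0:ℝ) < L ^ δ := Real.rpow_pos_of_pos hLpos _
  have hcomp : (1 - δ) * L ^ δ ≤ (L - 1) ^ δ := by
    have h1 : 1 - 1/L ≤ ((L-1)/L) ^ δ := by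
      have h0 : (0:ℝ) < (L-1)/L := by positivity
      have h01 : (L-1)/L ≤ 1 := by rw [div_le_one hLpos]; linarith
      calc 1 - 1/L = (L-1)/L := by field_simp
        _ = ((L-1)/L) ^ (1:ℝ) := (Real.rpow_one _).symm
        _ ≤ ((L-1)/L) ^ δ := Real.rpow_le_rpow_of_exponent_ge h0 h01 hδ1.le
    have h2 : ((L-1)/L) ^ δ = (L-1)^δ / L^δ := Real.div_rpow hLm1pos.le hLpos.le δ
    have h3 : 1 - δ ≤ (L-1)^δ / L^δ := by
      rw [h2] at h1; linarith
    rw [le_div_iff₀ hLδpos] at h3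
    exact h3
  have h2x : 2 * x ≤ 2 / L ^ δ := by
    have h2 : (1 - δ) / (L-1)^δ ≤ 1 / L^δ := by
      rw [div_le_div_iff₀ hLm1δpos hLδpos]
      linarith [hcomp]
    calc 2 * x ≤ 2 * ((1-δ)/(L-1)^δ) := by linarith
      _ ≤ 2 * (1/L^δ) := by linarith
      _ = 2 / L^δ := by ring
  have key : Real.exp b / Real.exp a - 1 ≤ 2 / L ^ δ := by
    rw [← Real.exp_sub]
    calc Real.exp (b - a) - 1 ≤ 2 * x := hex
      _ ≤ 2 / L ^ δ := h2x
  have hEa : (0:ℝ) < Real.exp a := Real.exp_pos a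
  have hEb : (0:ℝ) < Real.exp b := Real.exp_pos b
  have lhs_eq : 1/2 + 1/(2 * Real.exp a) - (1/2 + 1/(2 * Real.exp b))
      = (Real.exp b / Real.exp a - 1) * (1/(2 * Real.exp b)) := by
    field_simp
    ring
  have rhs_eq : (2 * (1/2 + 1/(2 * Real.exp b)) - 1) / L ^ δ
      = (2 / L ^ δ) * (1/(2 * Real.exp b)) := by
    field_simp
    ring
  rw [lhs_eq, rhs_eq]
  exact mul_le_mul_of_nonneg_right key (by positivity)
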